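/- Let J : X → X be a surjective linear isometry of a Banach space X, and let T be a bounded linear operator on X which commutes with J. Then T is a Riesz operator if and only if JT is a Riesz operator. -/
import Mathlib


open MeasureTheory Filter Topology

/-- A bounded operator is a *Riesz operator* iff it satisfies the Ruston condition of
asymptotic quasi-compactness. -/
def IsRieszOperator {X : Type*} [NormedAddCommGroup X] [NormedSpace ℂ X]
    (T : X →L[ℂ] X) : Prop :=
  Tendsto
    (fun n : ℕ =>
      (sInf {r : ℝ | ∃ C : X →L[ℂ] X, IsCompactOperator ⇑C ∧ r = ‖T ^ n - C‖}) ^ (1 / (n : ℝ)))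
    atTop (𝓝 0)

section Aux

variable {X : Type*} [NormedAddCommGroup X] [NormedSpace ℂ X]

lemma norm_isometry_comp (J : X →L[ℂ] X) (hJ : Isometry J) (B : X →L[ℂ] X) :
    ‖J ∘L B‖ = ‖B‖ := by
  have hnorm : ∀ x : X, ‖J x‖ = ‖x‖ := fun x => hJ.norm_map_of_map_zero (map_zero J) x
  apply le_antisymm
  · apply ContinuousLinearMap.opNorm_le_bound _ (norm_nonneg B)
    intro x
    calc ‖(J ∘L B) x‖ = ‖B x‖ := hnorm _
      _ ≤ ‖B‖ * ‖x‖ := B.le_opNorm x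
  · apply ContinuousLinearMap.opNorm_le_bound _ (norm_nonneg _)
    intro x
    calc ‖B x‖ = ‖(J ∘L B) x‖ := (hnorm _).symm
      _ ≤ ‖J ∘L B‖ * ‖x‖ := (J ∘L B).le_opNorm x

/-- Left composition with a surjective isometry leaves the set of distances to compact
operators unchanged. -/
lemma set_isometry_comp (J : X →L[ℂ] X) (hJiso : Isometry J) (hJsurj : Function.Surjective J)
    (A : X →L[ℂ] X) :
    {r : ℝ | ∃ C : X →L[ℂ] X, IsCompactOperator ⇑C ∧ r = ‖J ∘L A - C‖}
      = {r : ℝ | ∃ C : X →L[ℂ] X, IsCompactOperator ⇑C ∧ r = ‖A - C‖} := by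
  have hnorm : ∀ x : X, ‖J x‖ = ‖x‖ := fun x => hJiso.norm_map_of_map_zero (map_zero J) x
  set e : X ≃ₗᵢ[ℂ] X :=
    LinearIsometryEquiv.ofSurjective ⟨(J : X →ₗ[ℂ] X), hnorm⟩ hJsurj with he
  set Jinv : X →L[ℂ] X := e.symm.toLinearIsometry.toContinuousLinearMap with hJinv
  have hJJinv : J ∘L Jinv = ContinuousLinearMap.id ℂ X := by
    ext x
    have : J (e.symm x) = e (e.symm x) := rfl
    simp [Jinv, this]
  ext r
  constructor
  · rintro ⟨C, hC, rfl⟩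
    refine ⟨Jinv ∘L C, hC.clm_comp Jinv, ?_⟩
    have key : J ∘L (A - Jinv ∘L C) = J ∘L A - C := by
      rw [ContinuousLinearMap.comp_sub, ← ContinuousLinearMap.comp_assoc, hJJinv,
        ContinuousLinearMap.id_comp]
    rw [← key, norm_isometry_comp J hJiso]
  · rintro ⟨C, hC, rfl⟩
    refine ⟨J ∘L C, hC.clm_comp J, ?_⟩
    rw [← ContinuousLinearMap.comp_sub, norm_isometry_comp J hJiso]

lemma set_isometry_pow_comp (J : X →L[ℂ] X) (hJiso : Isometry J)
    (hJsurj : Function.Surjective J) (k : ℕ) (A : X →L[ℂ] X) :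
    {r : ℝ | ∃ C : X →L[ℂ] X, IsCompactOperator ⇑C ∧ r = ‖J ^ k * A - C‖}
      = {r : ℝ | ∃ C : X →L[ℂ] X, IsCompactOperator ⇑C ∧ r = ‖A - C‖} := by
  induction k with
  | zero => simp
  | succ k ih =>
      have : J ^ (k + 1) * A = J ∘L (J ^ k * A) := by
        rw [pow_succ']; exact (mul_assoc J (J ^ k) A).symm
      rw [this, set_isometry_comp J hJiso hJsurj, ih]

end Aux

/-- If `J` is a surjective linear isometry of a Banach space `X` and `T` is a bounded operator
commuting with `J`, then `T` is a Riesz operator iff `J ∘ T` is a Riesz operator. -/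
theorem riesz_iff_isometry_comp
    {X : Type*} [NormedAddCommGroup X] [NormedSpace ℂ X] [CompleteSpace X]
    (J : X →L[ℂ] X) (hJiso : Isometry J) (hJsurj : Function.Surjective J)
    (T : X →L[ℂ] X) (hcomm : J ∘L T = T ∘L J) :
    IsRieszOperator T ↔ IsRieszOperator (J ∘L T) := by
  have hCom : Commute J T := hcomm
  have hfun : ∀ n : ℕ,
      {r : ℝ | ∃ C : X →L[ℂ] X, IsCompactOperator ⇑C ∧ r = ‖(J ∘L T) ^ n - C‖}
        = {r : ℝ | ∃ C : X →L[ℂ] X, IsCompactOperator ⇑C ∧ r = ‖T ^ n - C‖} := by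
    intro n
    have hpow : (J ∘L T) ^ n = J ^ n * T ^ n := hCom.mul_pow n
    rw [hpow, set_isometry_pow_comp J hJiso hJsurj n (T ^ n)]
  unfold IsRieszOperator
  constructor <;> intro h <;> [skip; skip] <;>
    · convert h using 2 with n
      rw [hfun n]
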